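/- Let c ∈ ℝ and β > 1. The function f(x) = x^{-c} |log x|^{-β} · χ_{(0,1/2)}(x) belongs to X_{c,loc}, but (J^β_{0+,c} f)(x) = +∞ for every x > 1; hence the inclusion Dom J^β_{0+,c} ⊂ X_{c,loc} is strict for β > 1. -/

import Mathlib

open MeasureTheory Set
open Real Filter

-- Aux 1: integrability of x⁻¹ (−log x)^(−β) on (0, 1/2]
lemma auxInt (β : ℝ) (hβ : 1 < β) :
    IntegrableOn (fun x : ℝ => x⁻¹ * (-Real.log x) ^ (-β)) (Ioc 0 (1/2)) := by
  set h : ℝ → ℝ := fun x => x⁻¹ * (-Real.log x) ^ (-β) with hh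
  have hcont : ∀ ε : ℝ, 0 < ε → ContinuousOn h (Icc ε (1/2)) := by
    intro ε hε
    apply ContinuousOn.mul
    · exact continuousOn_inv₀.mono (fun x hx => ne_of_gt (lt_of_lt_of_le hε hx.1))
    · apply ContinuousOn.rpow_const
      · exact (Real.continuousOn_log.mono (fun x hx => ne_of_gt (lt_of_lt_of_le hε hx.1))).neg
      · intro x hx
        left
        have h1 : Real.log x < 0 :=
          Real.log_neg (lt_of_lt_of_le hε hx.1) (lt_of_le_of_lt hx.2 (by norm_num))
        simpa using ne_of_gt (neg_pos.mpr h1)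
  set a : ℕ → ℝ := fun n => 1 / (2 * (n + 1)) with ha
  have hapos : ∀ n : ℕ, 0 < a n := by
    intro n; apply div_pos one_pos; positivity
  have hale : ∀ n : ℕ, a n ≤ 1 / 2 := by
    intro n
    apply div_le_div_of_nonneg_left one_pos.le two_pos
    nlinarith [Nat.cast_nonneg (α := ℝ) n]
  have hfi : ∀ n : ℕ, IntegrableOn h (Ioc (a n) (1/2)) := fun n =>
    ((hcont (a n) (hapos n)).integrableOn_Icc).mono_set Ioc_subset_Icc_self
  apply integrableOn_Ioc_of_intervalIntegral_norm_bounded_left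
    (l := (atTop : Filter ℕ)) (I := (Real.log 2) ^ (1 - β) / (β - 1)) hfi
  · rw [ha]
    have h2 := tendsto_one_div_add_atTop_nhds_zero_nat.const_mul (1/2 : ℝ)
    rw [mul_zero] at h2
    refine h2.congr fun n => ?_
    field_simp
  · apply Filter.Eventually.of_forall
    intro n
    have hpos : ∀ x ∈ Icc (a n) (1/2), 0 < x := fun x hx => lt_of_lt_of_le (hapos n) hx.1
    have hnorm : ∀ x ∈ Ioc (a n) (1/2), ‖h x‖ = h x := by
      intro x hx
      have hx0 : 0 < x := lt_of_lt_of_le (hapos n) hx.1.le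
      have : 0 ≤ h x := mul_nonneg (inv_nonneg.mpr hx0.le) (Real.rpow_nonneg
        (by
          have := Real.log_neg hx0 (lt_of_le_of_lt hx.2 (by norm_num))
          linarith) _)
      rw [Real.norm_eq_abs, abs_of_nonneg this]
    rw [setIntegral_congr_fun measurableSet_Ioc hnorm,
      ← intervalIntegral.integral_of_le (hale n)]
    set G : ℝ → ℝ := fun x => (-Real.log x) ^ (1 - β) / (β - 1) with hG
    have hderiv : ∀ x ∈ uIcc (a n) (1/2), HasDerivAt G (h x) x := by
      intro x hx
      rw [uIcc_of_le (hale n)] at hx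
      have hx0 : 0 < x := hpos x hx
      have hlog : Real.log x < 0 := Real.log_neg hx0 (lt_of_le_of_lt hx.2 (by norm_num))
      have hL : 0 < -Real.log x := by linarith
      have h1 : HasDerivAt (fun x : ℝ => -Real.log x) (-x⁻¹) x :=
        (Real.hasDerivAt_log (ne_of_gt hx0)).neg
      have h2 : HasDerivAt (fun y : ℝ => y ^ (1 - β)) ((1-β) * (-Real.log x) ^ (1-β-1))
          (-Real.log x) := Real.hasDerivAt_rpow_const (Or.inl (ne_of_gt hL))
      have h3 := (h2.comp x h1).div_const (β - 1)
      refine h3.congr_deriv ?_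
      have hb : β - 1 ≠ 0 := by linarith
      rw [hh]
      have : (1 : ℝ) - β - 1 = -β := by ring
      rw [this]
      field_simp
      ring
    rw [intervalIntegral.integral_eq_sub_of_hasDerivAt hderiv
      (((hcont (a n) (hapos n)).mono (by rw [uIcc_of_le (hale n)])
        ).intervalIntegrable)]
    have hGnonneg : 0 ≤ G (a n) :=
      div_nonneg (Real.rpow_nonneg (by
        have := Real.log_neg (hapos n) (lt_of_le_of_lt (hale n) (by norm_num))
        linarith) _) (by linarith)
    have : G (1/2 : ℝ) = (Real.log 2) ^ (1 - β) / (β - 1) := by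
      rw [hG]
      norm_num [Real.log_div, Real.log_one]
    linarith [this ▸ (sub_le_self (G (1/2:ℝ)) hGnonneg)]

-- Aux 2: non-integrability of (u(−log u))⁻¹ near 0
lemma auxNot : ¬ IntegrableOn (fun u : ℝ => (u * (-Real.log u))⁻¹) (Ioo (0:ℝ) (1/2)) := by
  set F : ℝ → ℝ := fun u => Real.log (-Real.log u) with hF
  have hmem : Ioo (0:ℝ) (1/2) ∈ nhdsWithin (0:ℝ) (Ioi 0) :=
    Ioo_mem_nhdsGT_of_mem (by norm_num : (0:ℝ) ∈ Ico (0:ℝ) (1/2))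
  have hmem1 : Ioo (0:ℝ) 1 ∈ nhdsWithin (0:ℝ) (Ioi 0) :=
    Ioo_mem_nhdsGT_of_mem (by norm_num : (0:ℝ) ∈ Ico (0:ℝ) 1)
  have key : ∀ u ∈ Ioo (0:ℝ) 1,
      HasDerivAt F ((-Real.log u)⁻¹ * -u⁻¹) u := by
    intro u hu
    have hu0 : 0 < u := hu.1
    have hlog : Real.log u < 0 := Real.log_neg hu0 hu.2
    have hL : 0 < -Real.log u := by linarith
    have h1 : HasDerivAt (fun u : ℝ => -Real.log u) (-u⁻¹) u :=
      (Real.hasDerivAt_log (ne_of_gt hu0)).neg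
    exact (Real.hasDerivAt_log (ne_of_gt hL)).comp u h1
  apply not_integrableOn_of_tendsto_norm_atTop_of_deriv_isBigO_filter
    (f := F) (nhdsWithin (0:ℝ) (Ioi 0)) hmem
  · filter_upwards [hmem1] with u hu
    exact (key u hu).differentiableAt
  · have t1 : Tendsto (fun u : ℝ => -Real.log u) (nhdsWithin (0:ℝ) (Ioi 0)) atTop :=
      tendsto_neg_atBot_atTop.comp Real.tendsto_log_nhdsGT_zero
    have t2 : Tendsto F (nhdsWithin (0:ℝ) (Ioi 0)) atTop :=
      Real.tendsto_log_atTop.comp t1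
    exact tendsto_abs_atTop_atTop.comp t2
  · rw [Asymptotics.isBigO_iff]
    refine ⟨1, ?_⟩
    filter_upwards [hmem1] with u hu
    rw [(key u hu).deriv, one_mul]
    have hu0 : 0 < u := hu.1
    have hL : 0 < -Real.log u := by linarith [Real.log_neg hu0 hu.2]
    rw [Real.norm_eq_abs, Real.norm_eq_abs, mul_inv]
    rw [abs_le_iff_mul_self_le]
    apply le_of_eq
    ring

-- Aux 3: the lintegral is infinite
lemma auxTop : ∫⁻ u in Ioo (0:ℝ) (1/2), ENNReal.ofReal ((u * (-Real.log u))⁻¹) = ⊤ := by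
  by_contra hne
  apply auxNot
  have hmeas : Measurable (fun u : ℝ => (u * (-Real.log u))⁻¹) :=
    (measurable_id.mul Real.measurable_log.neg).inv
  refine ⟨hmeas.aestronglyMeasurable, ?_⟩
  rw [hasFiniteIntegral_iff_ofReal]
  · exact lt_top_iff_ne_top.mpr hne
  · filter_upwards [ae_restrict_mem measurableSet_Ioo] with u hu
    have hu0 : 0 < u := hu.1
    have hL : 0 < -Real.log u := by
      have := Real.log_neg hu0 (lt_trans hu.2 (by norm_num))
      linarith
    positivity

lemma mrpow (p : ℝ) : Measurable (fun x : ℝ => x ^ p) := by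
  apply measurable_of_continuousOn_compl_singleton (0 : ℝ)
  intro x hx
  exact (Real.continuousAt_rpow_const x p (Or.inl hx)).continuousWithinAt

def memXloc (c : ℝ) (f : ℝ → ℂ) : Prop :=
  ∀ a : ℝ, 0 < a →
    IntegrableOn (fun x : ℝ => x ^ (c - 1) * ‖f x‖) (Set.Ioo 0 a)

/-- The function f(x) = x^{-c}|log x|^{-β} χ_{(0,1/2)}(x) belongs to X_{c,loc}
but its Hadamard-type integral of order β > 1 is infinite for every x > 1. -/
theorem stmt9 (β c : ℝ) (hβ : 1 < β) :
    memXloc c (fun x : ℝ =>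
      if x ∈ Set.Ioo (0 : ℝ) (1 / 2) then
        ((x ^ (-c) * |Real.log x| ^ (-β) : ℝ) : ℂ) else 0) ∧
    ∀ x : ℝ, 1 < x →
      (∫⁻ u in Set.Ioo (0 : ℝ) x,
        ENNReal.ofReal (u ^ (c - 1) * Real.log (x / u) ^ (β - 1) *
          ‖(fun y : ℝ =>
            if y ∈ Set.Ioo (0 : ℝ) (1 / 2) then
              ((y ^ (-c) * |Real.log y| ^ (-β) : ℝ) : ℂ) else 0) u‖)) = ⊤ := by
  constructor
  · -- membership in X_{c,loc}
    intro a ha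
    set g : ℝ → ℝ := fun x => x ^ (c - 1) * ‖
      (if x ∈ Set.Ioo (0 : ℝ) (1 / 2) then
        ((x ^ (-c) * |Real.log x| ^ (-β) : ℝ) : ℂ) else 0)‖ with hg
    have hsub : Ioo (0:ℝ) a ⊆ Ioo (0:ℝ) (1/2) ∪ Ici (1/2 : ℝ) := by
      intro y hy
      rcases lt_or_ge y (1/2 : ℝ) with h | h
      · exact Or.inl ⟨hy.1, h⟩
      · exact Or.inr h
    apply IntegrableOn.mono_set _ hsub
    apply IntegrableOn.union
    · -- on Ioo 0 (1/2), g equals x⁻¹ (−log x)^(−β)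
      apply IntegrableOn.congr_fun ((auxInt β hβ).mono_set Ioo_subset_Ioc_self) _
        measurableSet_Ioo
      intro x hx
      have hx0 : 0 < x := hx.1
      have hlog : Real.log x < 0 := Real.log_neg hx0 (lt_trans hx.2 (by norm_num))
      rw [hg]
      simp only [if_pos hx, Complex.norm_real, Real.norm_eq_abs]
      rw [abs_of_nonneg (mul_nonneg (Real.rpow_nonneg hx0.le _)
        (Real.rpow_nonneg (abs_nonneg _) _)), abs_of_neg hlog]
      rw [← mul_assoc, ← Real.rpow_add hx0]
      have : c - 1 + -c = -1 := by ring
      rw [this, Real.rpow_neg_one]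
    · -- on Ici (1/2), g = 0
      apply IntegrableOn.congr_fun (integrableOn_zero) _ measurableSet_Ici
      intro x hx
      have : x ∉ Ioo (0:ℝ) (1/2) := fun h => absurd h.2 (not_lt.mpr hx)
      simp only [hg, if_neg this, norm_zero, mul_zero, Pi.zero_apply]
  · -- the Hadamard integral is infinite
    intro x hx
    set Fn : ℝ → ENNReal := fun u => ENNReal.ofReal (u ^ (c - 1) * Real.log (x / u) ^ (β - 1) *
      ‖(if u ∈ Set.Ioo (0 : ℝ) (1 / 2) then
        ((u ^ (-c) * |Real.log u| ^ (-β) : ℝ) : ℂ) else 0)‖) with hFn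
    have hmeasFn : Measurable Fn := by
      apply ENNReal.measurable_ofReal.comp
      apply Measurable.mul
      · apply Measurable.mul (mrpow (c-1))
        exact (mrpow (β-1)).comp (Real.measurable_log.comp (measurable_const.div measurable_id))
      · apply continuous_norm.measurable.comp
        apply Measurable.ite measurableSet_Ioo _ measurable_const
        exact Complex.measurable_ofReal.comp
          ((mrpow (-c)).mul ((mrpow (-β)).comp Real.measurable_log.abs))
    have hbound : ∫⁻ u in Ioo (0:ℝ) (1/2), ENNReal.ofReal ((u * (-Real.log u))⁻¹)
        ≤ ∫⁻ u in Ioo (0:ℝ) (1/2), Fn u := by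
      apply setLIntegral_mono hmeasFn
      intro u hu
      have hu0 : 0 < u := hu.1
      have hu1 : u < 1 := lt_trans hu.2 (by norm_num)
      have hlog : Real.log u < 0 := Real.log_neg hu0 hu1
      have hL : 0 < -Real.log u := by linarith
      have hx0 : 0 < x := lt_trans one_pos hx
      have hlogx : 0 < Real.log x := Real.log_pos hx
      have hdiv : Real.log (x / u) = Real.log x - Real.log u :=
        Real.log_div (ne_of_gt hx0) (ne_of_gt hu0)
      have hge : -Real.log u ≤ Real.log (x / u) := by rw [hdiv]; linarith
      have h1 : (-Real.log u) ^ (β - 1) ≤ (Real.log (x / u)) ^ (β - 1) :=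
        Real.rpow_le_rpow hL.le hge (by linarith)
      rw [hFn]
      simp only [if_pos hu, Complex.norm_real, Real.norm_eq_abs]
      apply ENNReal.ofReal_le_ofReal
      rw [abs_of_nonneg (mul_nonneg (Real.rpow_nonneg hu0.le _)
        (Real.rpow_nonneg (abs_nonneg _) _)), abs_of_neg hlog]
      have e1 : u ^ (c - 1) * u ^ (-c) = u⁻¹ := by
        rw [← Real.rpow_add hu0]
        have : c - 1 + -c = -1 := by ring
        rw [this, Real.rpow_neg_one]
      have e2 : (-Real.log u) ^ (β - 1) * (-Real.log u) ^ (-β) = (-Real.log u)⁻¹ := by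
        rw [← Real.rpow_add hL]
        have : β - 1 + -β = -1 := by ring
        rw [this, Real.rpow_neg_one]
      calc (u * (-Real.log u))⁻¹ = u⁻¹ * (-Real.log u)⁻¹ := mul_inv _ _
        _ = (u ^ (c - 1) * u ^ (-c)) * ((-Real.log u) ^ (β - 1) * (-Real.log u) ^ (-β)) := by
            rw [e1, e2]
        _ ≤ (u ^ (c - 1) * u ^ (-c)) * ((Real.log (x/u)) ^ (β - 1) * (-Real.log u) ^ (-β)) := by
            apply mul_le_mul_of_nonneg_left
              (mul_le_mul_of_nonneg_right h1 (Real.rpow_nonneg hL.le _))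
              (mul_nonneg (Real.rpow_nonneg hu0.le _) (Real.rpow_nonneg hu0.le _))
        _ = u ^ (c - 1) * Real.log (x / u) ^ (β - 1) * (u ^ (-c) * (-Real.log u) ^ (-β)) := by
            ring
    have hsub : Ioo (0:ℝ) (1/2) ⊆ Ioo (0:ℝ) x := fun u hu =>
      ⟨hu.1, lt_trans hu.2 (lt_trans (by norm_num) hx)⟩
    have hmono : ∫⁻ u in Ioo (0:ℝ) (1/2), Fn u ≤ ∫⁻ u in Ioo (0:ℝ) x, Fn u :=
      lintegral_mono_set hsub
    exact eq_top_mono (le_trans (auxTop ▸ hbound) hmono) rfl
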